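/- Let f, g be real quadratic forms in n variables, and suppose there exists x' ∈ ℝⁿ with g(x') > 0. Then {x : g(x) ≥ 0} ⊆ {x : f(x) ≥ 0} if and only if there exists a real number t ≥ 0 such that f(x) - t·g(x) ≥ 0 for all x ∈ ℝⁿ. -/

import Mathlib

open MvPolynomial

lemma deg2_decomp {σ : Type*} [DecidableEq σ] (d : σ →₀ ℕ) (hd : (d.sum fun _ e => e) = 2) :
    ∃ a b : σ, d = Finsupp.single a 1 + Finsupp.single b 1 := by
  have h : Multiset.card d.toMultiset = 2 := by
    rw [Finsupp.card_toMultiset]; exact hd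
  obtain ⟨a, b, hab⟩ := Multiset.card_eq_two.mp h
  refine ⟨a, b, ?_⟩
  have := congrArg Multiset.toFinsupp (hab)
  rw [Finsupp.toMultiset_toFinsupp] at this
  rw [this]
  rw [show ({a, b} : Multiset σ) = {a} + {b} from rfl, Multiset.toFinsupp_add,
    Multiset.toFinsupp_singleton, Multiset.toFinsupp_singleton]

lemma deg2_support {n : ℕ} {g : MvPolynomial (Fin n) ℝ} (hg : g.IsHomogeneous 2)
    {d : Fin n →₀ ℕ} (hd : d ∈ g.support) :
    ∃ a b : Fin n, d = Finsupp.single a 1 + Finsupp.single b 1 := by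
  apply deg2_decomp
  have h2 := hg (mem_support_iff.mp hd)
  simpa [Finsupp.weight_apply, Finsupp.sum] using h2

lemma quad_expand {n : ℕ} {g : MvPolynomial (Fin n) ℝ} (hg : g.IsHomogeneous 2)
    (x y : Fin n → ℝ) (s : ℝ) :
    eval (x + s • y) g =
      eval x g + s * (eval (x + y) g - eval x g - eval y g) + s ^ 2 * eval y g := by
  have h : ∀ v : Fin n → ℝ, eval v g = ∑ d ∈ g.support, eval v (monomial d (coeff d g)) := by
    intro v; conv_lhs => rw [g.as_sum]
    rw [map_sum]
  simp only [h]
  have perterm : ∀ d ∈ g.support,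
      eval (x + s • y) (monomial d (coeff d g)) =
        eval x (monomial d (coeff d g)) +
          s * (eval (x + y) (monomial d (coeff d g)) - eval x (monomial d (coeff d g)) -
            eval y (monomial d (coeff d g))) +
          s ^ 2 * eval y (monomial d (coeff d g)) := by
    intro d hd
    obtain ⟨a, b, rfl⟩ := deg2_support hg hd
    rw [monomial_single_add, pow_one]
    simp only [map_mul, eval_X, eval_monomial, Pi.add_apply, Pi.smul_apply, smul_eq_mul]
    rw [Finsupp.prod_single_index (by simp), Finsupp.prod_single_index (by simp),
      Finsupp.prod_single_index (by simp), Finsupp.prod_single_index (by simp)]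
    simp only [pow_one, Pi.add_apply, Pi.smul_apply, smul_eq_mul]
    ring
  rw [Finset.sum_congr rfl perterm]
  simp only [Finset.sum_add_distrib, Finset.sum_sub_distrib, Finset.mul_sum, mul_sub]

lemma quad_smul {n : ℕ} {g : MvPolynomial (Fin n) ℝ} (hg : g.IsHomogeneous 2)
    (y : Fin n → ℝ) (s : ℝ) :
    eval (s • y) g = s ^ 2 * eval y g := by
  have h : ∀ v : Fin n → ℝ, eval v g = ∑ d ∈ g.support, eval v (monomial d (coeff d g)) := by
    intro v; conv_lhs => rw [g.as_sum]
    rw [map_sum]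
  simp only [h]
  rw [Finset.mul_sum]
  refine Finset.sum_congr rfl fun d hd => ?_
  obtain ⟨a, b, rfl⟩ := deg2_support hg hd
  rw [monomial_single_add, pow_one]
  simp only [map_mul, eval_X, eval_monomial, Pi.smul_apply, smul_eq_mul]
  rw [Finsupp.prod_single_index (by simp), Finsupp.prod_single_index (by simp)]
  simp only [pow_one, Pi.smul_apply, smul_eq_mul]
  ring

lemma slemma_aux (c1 qu qy : ℝ) {cf : ℝ}
    (h : ∀ s : ℝ, -1 + s * c1 + s ^ 2 = 0 → 0 ≤ qu + s * cf + s ^ 2 * qy) :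
    0 ≤ qu + qy := by
  set D := Real.sqrt (c1 ^ 2 + 4) with hD
  have hD2 : D ^ 2 = c1 ^ 2 + 4 := Real.sq_sqrt (by positivity)
  have hD0 : 0 < D := Real.sqrt_pos.mpr (by positivity)
  have e1 := h ((-c1 - D) / 2) (by linear_combination hD2 / 4)
  have e2 := h ((-c1 + D) / 2) (by linear_combination hD2 / 4)
  have hprod : D * qy * D ^ 2 = D * qy * (c1 ^ 2 + 4) := by rw [hD2]
  nlinarith [mul_nonneg (show (0:ℝ) ≤ (-c1 + D) / 2 by nlinarith) e1,
    mul_nonneg (show (0:ℝ) ≤ (c1 + D) / 2 by nlinarith) e2, hD0, hD2, hprod]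

theorem stmt_2 (n : ℕ) (f g : MvPolynomial (Fin n) ℝ)
    (hf : f.IsHomogeneous 2) (hg : g.IsHomogeneous 2)
    (x' : Fin n → ℝ) (hx' : 0 < eval x' g) :
    {x : Fin n → ℝ | 0 ≤ eval x g} ⊆ {x : Fin n → ℝ | 0 ≤ eval x f} ↔
      ∃ t : ℝ, 0 ≤ t ∧ ∀ x : Fin n → ℝ, 0 ≤ eval x f - t * eval x g := by
  constructor
  · intro H
    have H' : ∀ x : Fin n → ℝ, 0 ≤ eval x g → 0 ≤ eval x f := fun x hx => H hx
    set T : Set ℝ := {a | ∃ y : Fin n → ℝ, eval y g = 1 ∧ eval y f = a} with hT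
    have hx'' : eval ((Real.sqrt (eval x' g))⁻¹ • x') g = 1 := by
      rw [quad_smul hg, inv_pow, Real.sq_sqrt hx'.le]
      exact inv_mul_cancel₀ (ne_of_gt hx')
    have hTne : T.Nonempty := ⟨_, _, hx'', rfl⟩
    have hTbd : BddBelow T := by
      refine ⟨0, fun a ha => ?_⟩
      obtain ⟨y, hy1, hy2⟩ := ha
      exact hy2 ▸ H' y (by rw [hy1]; norm_num)
    set t := sInf T with ht
    have ht0 : 0 ≤ t := by
      refine le_csInf hTne fun a ha => ?_
      obtain ⟨y, hy1, hy2⟩ := ha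
      exact hy2 ▸ H' y (by rw [hy1]; norm_num)
    refine ⟨t, ht0, fun x => ?_⟩
    rcases lt_trichotomy (eval x g) 0 with hneg | hzero | hpos
    · -- g(x) < 0
      set c := Real.sqrt (-eval x g) with hc
      have hcpos : 0 < c := Real.sqrt_pos.mpr (by linarith)
      have hc2 : c ^ 2 = -eval x g := Real.sq_sqrt (by linarith)
      set u := c⁻¹ • x with hudef
      have hu : eval u g = -1 := by
        rw [hudef, quad_smul hg, inv_pow, hc2]
        field_simp
        rw [div_self (ne_of_lt hneg)]
      have keyclaim : ∀ y : Fin n → ℝ, eval y g = 1 → 0 ≤ eval u f + eval y f := by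
        intro y hy
        apply slemma_aux (eval (u + y) g - eval u g - eval y g)
          (cf := eval (u + y) f - eval u f - eval y f)
        intro s hs
        have hg0 : eval (u + s • y) g = 0 := by
          rw [quad_expand hg]
          rw [hu, hy] at hs ⊢
          linarith
        have hf0 := H' _ (le_of_eq hg0.symm)
        rw [quad_expand hf] at hf0
        exact hf0
      have hu_ge : -t ≤ eval u f := by
        have hlb : ∀ a ∈ T, -(eval u f) ≤ a := by
          intro a ha
          obtain ⟨y, hy1, hy2⟩ := ha
          have := keyclaim y hy1
          linarith [hy2 ▸ this]
        have := le_csInf hTne hlb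
        linarith
      have hcu : c • u = x := by
        rw [hudef, smul_smul, mul_inv_cancel₀ hcpos.ne', one_smul]
      have hxf : eval x f = c ^ 2 * eval u f := by rw [← hcu, quad_smul hf]
      have hxg : eval x g = -(c ^ 2) := by rw [hc2]; ring
      rw [hxf, hxg]
      nlinarith [mul_nonneg (sq_nonneg c) (show (0:ℝ) ≤ eval u f + t by linarith)]
    · -- g(x) = 0
      rw [hzero, mul_zero, sub_zero]
      exact H' x (le_of_eq hzero.symm)
    · -- g(x) > 0
      set c := Real.sqrt (eval x g) with hc
      have hcpos : 0 < c := Real.sqrt_pos.mpr hpos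
      have hc2 : c ^ 2 = eval x g := Real.sq_sqrt hpos.le
      set u := c⁻¹ • x with hudef
      have hu : eval u g = 1 := by
        rw [hudef, quad_smul hg, inv_pow, hc2]
        exact inv_mul_cancel₀ (ne_of_gt hpos)
      have hut : t ≤ eval u f := csInf_le hTbd ⟨u, hu, rfl⟩
      have hcu : c • u = x := by
        rw [hudef, smul_smul, mul_inv_cancel₀ hcpos.ne', one_smul]
      have hxf : eval x f = c ^ 2 * eval u f := by rw [← hcu, quad_smul hf]
      have hxg : eval x g = c ^ 2 := hc2.symm
      rw [hxf, hxg]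
      nlinarith [mul_nonneg (sq_nonneg c) (show (0:ℝ) ≤ eval u f - t by linarith)]
  · rintro ⟨t, ht, hineq⟩ x hx
    have h1 := hineq x
    have h2 : (0:ℝ) ≤ eval x g := hx
    have := mul_nonneg ht h2
    show (0:ℝ) ≤ eval x f
    linarith
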